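/- Let K be an infinite dimensional metrizable Choquet simplex and (p_n)_{n≥0} an increasing sequence of positive integers with p_n | p_{n+1}. Then there exist an increasing subsequence (n_i)_{i≥1} and positive integer matrices (M_i)_{i≥1} managed by (p_{n_i})_{i≥0}, with k_{i+1} ≤ min entry of M_i, such that K is affinely homeomorphic to the inverse limit lim←(Δ(k_i, p_{n_i}), M_i), where k_i is the number of rows of M_i. -/

import Mathlib

/-- The simplex `Δ(k,p) = {v ∈ (ℝ⁺)^k : Σ v_i = 1/p}`; `Δ(k,1)` is the unit simplex. -/
def simplexSet (k : ℕ) (p : ℕ) : Set (Fin k → ℝ) :=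
  {v | (∀ i, 0 ≤ v i) ∧ (∑ i, v i) = 1 / (p : ℝ)}

/-- The sequence of positive integer matrices `(M n)` is managed by the
increasing sequence `(p n)`. -/
def IsManaged (p : ℕ → ℕ) (k : ℕ → ℕ)
    (M : ∀ n, Matrix (Fin (k n)) (Fin (k (n + 1))) ℤ) : Prop :=
  (∀ n, 0 < p n) ∧ StrictMono p ∧ (∀ n, p n ∣ p (n + 1)) ∧
  (∀ n, 2 ≤ k n) ∧ (∀ n i j, 0 < M n i j) ∧
  (∀ n j, (∑ i, M n i j) * (p n : ℤ) = (p (n + 1) : ℤ))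

/-- The sets `S ⊆ E` and `T ⊆ F` are affinely homeomorphic. -/
def AffinelyHomeomorphic {E F : Type*}
    [AddCommGroup E] [Module ℝ E] [TopologicalSpace E]
    [AddCommGroup F] [Module ℝ F] [TopologicalSpace F]
    (S : Set E) (T : Set F) : Prop :=
  ∃ f : S ≃ₜ T, ∀ (x y z : S) (t : ℝ), 0 ≤ t → t ≤ 1 →
    (z : E) = t • (x : E) + (1 - t) • (y : E) →
    (f z : F) = t • (f x : F) + (1 - t) • (f y : F)

namespace Stmt15aux
noncomputable section
open Filter Finset

abbrev E := ℕ → ℝ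

/-- truncated ℓ¹ norm -/
def n1 (m : ℕ) (x : E) : ℝ := ∑ l ∈ Finset.range m, |x l|

lemma n1_nonneg (m : ℕ) (x : E) : 0 ≤ n1 m x :=
  Finset.sum_nonneg fun _ _ => abs_nonneg _

lemma n1_add_le (m : ℕ) (x y : E) : n1 m (fun l => x l + y l) ≤ n1 m x + n1 m y := by
  simp only [n1]
  rw [← Finset.sum_add_distrib]
  exact Finset.sum_le_sum fun l _ => abs_add_le _ _

lemma abs_le_n1 {m l : ℕ} (hl : l < m) (x : E) : |x l| ≤ n1 m x :=
  Finset.single_le_sum (f := fun l => |x l|) (fun _ _ => abs_nonneg _) (Finset.mem_range.2 hl)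

/-- column system: entries of the `i`-th stochastic matrix, size `(i+2) × (i+3)`. -/
structure ColSys (g : ℕ → ℕ → ℕ → ℝ) : Prop where
  supp : ∀ i l j, ¬(l < i+2 ∧ j < i+3) → g i l j = 0
  nonneg : ∀ i l j, 0 ≤ g i l j
  colsum : ∀ i j, j < i+3 → ∑ l ∈ Finset.range (i+2), g i l j = 1

/-- apply the `i`-th matrix -/
def ap (g : ℕ → ℕ → ℕ → ℝ) (i : ℕ) (x : E) : E :=
  fun l => ∑ j ∈ Finset.range (i+3), g i l j * x j

/-- composite `g i ∘ g (i+1) ∘ ⋯ ∘ g (i+d-1)` -/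
def P (g : ℕ → ℕ → ℕ → ℝ) (i : ℕ) : ℕ → E → E
  | 0 => id
  | d+1 => fun x => P g i d (ap g (i+d) x)

@[simp] lemma P_zero (g) (i : ℕ) (x : E) : P g i 0 x = x := rfl

lemma P_succ (g) (i d : ℕ) (x : E) : P g i (d+1) x = P g i d (ap g (i+d) x) := rfl

lemma P_succ_left (g) (i d : ℕ) (x : E) : P g i (d+1) x = ap g i (P g (i+1) d x) := by
  induction d generalizing x with
  | zero => rfl
  | succ d ih =>
      rw [P_succ, ih, P_succ, show i+1+d = i+(d+1) from by omega]


lemma ap_comb (g) (i : ℕ) (t s : ℝ) (x y : E) :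
    ap g i (fun l => t * x l + s * y l) = fun l => t * ap g i x l + s * ap g i y l := by
  funext l
  simp only [ap, Finset.mul_sum, ← Finset.sum_add_distrib]
  exact Finset.sum_congr rfl fun j _ => by ring

lemma P_comb (g) (i d : ℕ) (t s : ℝ) (x y : E) :
    P g i d (fun l => t * x l + s * y l) = fun l => t * P g i d x l + s * P g i d y l := by
  induction d generalizing x y with
  | zero => rfl
  | succ d ih => rw [P_succ, P_succ, P_succ, ap_comb, ih]

lemma ap_sub (g) (i : ℕ) (x y : E) :
    (fun l => ap g i x l - ap g i y l) = ap g i (fun l => x l - y l) := by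
  rw [show (fun l => x l - y l) = fun l => 1 * x l + -1 * y l from by funext l; ring,
    ap_comb g i 1 (-1) x y]
  funext l; ring

lemma P_sub (g) (i d : ℕ) (x y : E) :
    (fun l => P g i d x l - P g i d y l) = P g i d (fun l => x l - y l) := by
  rw [show (fun l => x l - y l) = fun l => 1 * x l + -1 * y l from by funext l; ring,
    P_comb g i d 1 (-1) x y]
  funext l; ring

lemma ap_supp {g} (hg : ColSys g) (i : ℕ) (x : E) {l : ℕ} (hl : i+2 ≤ l) : ap g i x l = 0 := by
  apply Finset.sum_eq_zero
  intro j _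
  rw [hg.supp i l j (by omega), zero_mul]

lemma P_supp {g} (hg : ColSys g) (i : ℕ) {d : ℕ} (hd : 0 < d) (x : E) {l : ℕ}
    (hl : i+2 ≤ l) : P g i d x l = 0 := by
  obtain ⟨d, rfl⟩ := Nat.exists_eq_succ_of_ne_zero hd.ne'
  rw [P_succ_left]
  exact ap_supp hg i _ hl

lemma n1_ap_le {g} (hg : ColSys g) (i : ℕ) (x : E) :
    n1 (i+2) (ap g i x) ≤ n1 (i+3) x := by
  calc n1 (i+2) (ap g i x)
      ≤ ∑ l ∈ Finset.range (i+2), ∑ j ∈ Finset.range (i+3), g i l j * |x j| := by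
        refine Finset.sum_le_sum fun l _ => ?_
        refine (Finset.abs_sum_le_sum_abs _ _).trans ?_
        refine Finset.sum_le_sum fun j _ => ?_
        rw [abs_mul, abs_of_nonneg (hg.nonneg i l j)]
    _ = ∑ j ∈ Finset.range (i+3), (∑ l ∈ Finset.range (i+2), g i l j) * |x j| := by
        rw [Finset.sum_comm]
        exact Finset.sum_congr rfl fun j _ => by rw [Finset.sum_mul]
    _ ≤ ∑ j ∈ Finset.range (i+3), |x j| := by
        refine Finset.sum_le_sum fun j hj => ?_
        rw [hg.colsum i j (Finset.mem_range.1 hj), one_mul]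

lemma n1_P_le {g} (hg : ColSys g) (i d : ℕ) (x : E) :
    n1 (i+2) (P g i d x) ≤ n1 (i+d+2) x := by
  induction d generalizing x with
  | zero => exact le_of_eq rfl
  | succ d ih =>
      rw [P_succ]
      exact (ih _).trans (n1_ap_le hg (i+d) x)

/-- one-step approximation error on the (extended) simplex -/
lemma n1_ap_sub_ap {g h : ℕ → ℕ → ℕ → ℝ} {i : ℕ} {e : ℝ}
    (hcl : ∀ j < i+3, ∑ l ∈ Finset.range (i+2), |g i l j - h i l j| ≤ e)
    {x : E} (hx0 : ∀ j, 0 ≤ x j) (hx1 : ∑ j ∈ Finset.range (i+3), x j = 1) :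
    n1 (i+2) (fun l => ap g i x l - ap h i x l) ≤ e := by
  calc n1 (i+2) (fun l => ap g i x l - ap h i x l)
      ≤ ∑ l ∈ Finset.range (i+2), ∑ j ∈ Finset.range (i+3), |g i l j - h i l j| * x j := by
        refine Finset.sum_le_sum fun l _ => ?_
        simp only [ap, ← Finset.sum_sub_distrib]
        refine (Finset.abs_sum_le_sum_abs _ _).trans (Finset.sum_le_sum fun j _ => ?_)
        rw [← sub_mul, abs_mul, abs_of_nonneg (hx0 j)]
    _ = ∑ j ∈ Finset.range (i+3), (∑ l ∈ Finset.range (i+2), |g i l j - h i l j|) * x j := by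
        rw [Finset.sum_comm]
        exact Finset.sum_congr rfl fun j _ => by rw [Finset.sum_mul]
    _ ≤ ∑ j ∈ Finset.range (i+3), e * x j :=
        Finset.sum_le_sum fun j hj =>
          mul_le_mul_of_nonneg_right (hcl j (Finset.mem_range.1 hj)) (hx0 j)
    _ = e := by rw [← Finset.mul_sum, hx1, mul_one]

/-- `ap` preserves the extended simplex -/
lemma ap_simplex {g} (hg : ColSys g) (i : ℕ) {x : E}
    (hx0 : ∀ j, 0 ≤ x j) (hx1 : ∑ j ∈ Finset.range (i+3), x j = 1) :
    (∀ l, 0 ≤ ap g i x l) ∧ ∑ l ∈ Finset.range (i+2), ap g i x l = 1 := by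
  constructor
  · intro l
    exact Finset.sum_nonneg fun j _ => mul_nonneg (hg.nonneg i l j) (hx0 j)
  · rw [show ∑ l ∈ Finset.range (i+2), ap g i x l
        = ∑ j ∈ Finset.range (i+3), (∑ l ∈ Finset.range (i+2), g i l j) * x j from by
        simp only [ap]
        rw [Finset.sum_comm]
        exact Finset.sum_congr rfl fun j _ => by rw [Finset.sum_mul]]
    rw [← hx1]
    exact Finset.sum_congr rfl fun j hj => by
      rw [hg.colsum i j (Finset.mem_range.1 hj), one_mul]


lemma ap_nonneg {g} (hg : ColSys g) (i : ℕ) {x : E} (hx : ∀ l, 0 ≤ x l) (l : ℕ) :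
    0 ≤ ap g i x l :=
  Finset.sum_nonneg fun j _ => mul_nonneg (hg.nonneg i l j) (hx j)

lemma P_simplex {g} (hg : ColSys g) (i d : ℕ) {x : E}
    (hx0 : ∀ l, 0 ≤ x l) (hx1 : ∑ l ∈ Finset.range (i+d+2), x l = 1) :
    (∀ l, 0 ≤ P g i d x l) ∧ ∑ l ∈ Finset.range (i+2), P g i d x l = 1 := by
  induction d generalizing x with
  | zero => exact ⟨hx0, hx1⟩
  | succ d ih =>
      rw [P_succ]
      have h1 := ap_simplex hg (i+d) hx0 hx1
      exact ih h1.1 h1.2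

/-- exact threads are preserved by composites -/
lemma P_thread {g} {x : ℕ → E} (hx : ∀ j, x j = ap g j (x (j+1))) (i d : ℕ) :
    P g i d (x (i+d)) = x i := by
  induction d with
  | zero => rfl
  | succ d ih =>
      rw [show i+(d+1) = (i+d)+1 from rfl, P_succ, ← hx (i+d), ih]


/-! ### Limit construction -/

def eps (n : ℕ) : ℝ := (1/2 : ℝ)^n

lemma eps_pos (n : ℕ) : 0 < eps n := pow_pos (by norm_num) n

lemma sum_eps_le (i d D : ℕ) : ∑ e ∈ Finset.Ico d D, eps (i+e) ≤ 2 * eps (i+d) := by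
  rw [Finset.sum_Ico_eq_sum_range]
  have h1 : ∀ e ∈ Finset.range (D - d), eps (i + (d + e)) = eps (i+d) * (1/2:ℝ)^e := by
    intro e _
    rw [show i + (d+e) = (i+d) + e from by omega, eps, eps, pow_add]
  rw [Finset.sum_congr rfl h1, ← Finset.mul_sum]
  calc eps (i+d) * ∑ e ∈ Finset.range (D-d), (1/2:ℝ)^e
      ≤ eps (i+d) * 2 := by
        refine mul_le_mul_of_nonneg_left ?_ (eps_pos _).le
        exact sum_geometric_two_le _
    _ = 2 * eps (i+d) := by ring

lemma tendsto_eps (i : ℕ) (c : ℝ) : Filter.Tendsto (fun d => c * eps (i+d)) Filter.atTop (nhds 0) := by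
  have : Filter.Tendsto (fun d : ℕ => (1/2:ℝ)^d) Filter.atTop (nhds 0) :=
    tendsto_pow_atTop_nhds_zero_of_lt_one (by norm_num) (by norm_num)
  have h2 : Filter.Tendsto (fun d : ℕ => c * eps i * (1/2:ℝ)^d) Filter.atTop (nhds 0) := by
    simpa using this.const_mul (c * eps i)
  refine h2.congr fun d => ?_
  simp only [eps, pow_add]
  ring

section Limit

variable {g h : ℕ → ℕ → ℕ → ℝ} {x : ℕ → E}

/-- the `d`-th approximant -/
def Fseq (h : ℕ → ℕ → ℕ → ℝ) (x : ℕ → E) (i d : ℕ) : E := P h i d (x (i+d))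

/-- the limit thread -/
def limP (h : ℕ → ℕ → ℕ → ℝ) (x : ℕ → E) (i : ℕ) : E :=
  fun l => limUnder Filter.atTop (fun d => Fseq h x i d l)

/-- hypotheses: `x` is a `g`-thread in the extended simplices, `h` is `eps`-close to `g`. -/
structure Hyp (g h : ℕ → ℕ → ℕ → ℝ) (x : ℕ → E) : Prop where
  hg : ColSys g
  hh : ColSys h
  hcl : ∀ i, ∀ j < i+3, ∑ l ∈ Finset.range (i+2), |g i l j - h i l j| ≤ eps i
  hx0 : ∀ j l, 0 ≤ x j l
  hx1 : ∀ j, ∑ l ∈ Finset.range (j+2), x j l = 1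
  hxs : ∀ j l, j+2 ≤ l → x j l = 0
  hxt : ∀ j, x j = ap g j (x (j+1))

namespace Hyp

variable (H : Hyp g h x)
include H

lemma step (i d : ℕ) :
    n1 (i+2) (fun l => Fseq h x i (d+1) l - Fseq h x i d l) ≤ eps (i+d) := by
  have e1 : Fseq h x i (d+1) = P h i d (ap h (i+d) (x (i+d+1))) := rfl
  have e2 : Fseq h x i d = P h i d (ap g (i+d) (x (i+d+1))) := by
    rw [Fseq, H.hxt (i+d)]
  rw [e1, e2, P_sub]
  refine (n1_P_le H.hh i d _).trans ?_
  rw [show (fun l => ap h (i+d) (x (i+d+1)) l - ap g (i+d) (x (i+d+1)) l)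
      = fun l => ap h (i+d) (x (i+d+1)) l - ap g (i+d) (x (i+d+1)) l from rfl]
  refine n1_ap_sub_ap (fun j hj => ?_) (H.hx0 (i+d+1)) (H.hx1 (i+d+1))
  rw [show ∑ l ∈ Finset.range (i+d+2), |h (i+d) l j - g (i+d) l j|
      = ∑ l ∈ Finset.range (i+d+2), |g (i+d) l j - h (i+d) l j| from
    Finset.sum_congr rfl fun l _ => abs_sub_comm _ _]
  exact H.hcl (i+d) j hj

lemma diff_le {i d D : ℕ} (hdD : d ≤ D) :
    n1 (i+2) (fun l => Fseq h x i D l - Fseq h x i d l) ≤ 2 * eps (i+d) := by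
  refine le_trans ?_ (sum_eps_le i d D)
  induction D with
  | zero =>
      obtain rfl : d = 0 := Nat.le_zero.1 hdD
      simp [n1]
  | succ D ih =>
      rcases Nat.lt_or_ge d (D+1) with hd | hd
      · have hd' : d ≤ D := Nat.lt_succ_iff.1 hd
        rw [Finset.sum_Ico_succ_top hd']
        calc n1 (i+2) (fun l => Fseq h x i (D+1) l - Fseq h x i d l)
            ≤ n1 (i+2) (fun l => Fseq h x i (D+1) l - Fseq h x i D l)
              + n1 (i+2) (fun l => Fseq h x i D l - Fseq h x i d l) := by
              refine le_trans (le_of_eq ?_) (n1_add_le _ _ _)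
              congr 1; funext l; ring
          _ ≤ eps (i+D) + ∑ e ∈ Finset.Ico d D, eps (i+e) := by
              refine add_le_add (H.step i D) (ih hd')
          _ = ∑ e ∈ Finset.Ico d D, eps (i+e) + eps (i+D) := by ring
      · obtain rfl : d = D+1 := le_antisymm hdD hd
        simp [n1]

lemma Fseq_supp (i d l : ℕ) (hl : i+2 ≤ l) : Fseq h x i d l = 0 := by
  rcases Nat.eq_zero_or_pos d with rfl | hd
  · exact H.hxs i l hl
  · exact P_supp H.hh i hd _ hl

lemma dist_Fseq {i : ℕ} (l : ℕ) {d D : ℕ} (hdD : d ≤ D) :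
    dist (Fseq h x i D l) (Fseq h x i d l) ≤ 2 * eps (i+d) := by
  rcases Nat.lt_or_ge l (i+2) with hl | hl
  · rw [Real.dist_eq]
    exact le_trans (abs_le_n1 hl (fun l => Fseq h x i D l - Fseq h x i d l)) (H.diff_le hdD)
  · rw [H.Fseq_supp i d l hl, H.Fseq_supp i D l hl]
    rw [dist_self]
    have := eps_pos (i+d)
    linarith

lemma cauchy (i l : ℕ) : CauchySeq (fun d => Fseq h x i d l) := by
  rw [Metric.cauchySeq_iff']
  intro e he
  obtain ⟨N, hN⟩ := (Filter.Tendsto.eventually_lt_const he (tendsto_eps i 2)).exists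
  exact ⟨N, fun n hn => lt_of_le_of_lt (H.dist_Fseq l hn) hN⟩

lemma tendsto_limP (i l : ℕ) :
    Filter.Tendsto (fun d => Fseq h x i d l) Filter.atTop (nhds (limP h x i l)) := by
  obtain ⟨a, ha⟩ := cauchySeq_tendsto_of_complete (H.cauchy i l)
  rw [limP, ha.limUnder_eq]
  exact ha


lemma limP_dist (i d : ℕ) :
    n1 (i+2) (fun l => limP h x i l - Fseq h x i d l) ≤ 2 * eps (i+d) := by
  have key : Filter.Tendsto
      (fun D => n1 (i+2) (fun l => Fseq h x i D l - Fseq h x i d l)) Filter.atTop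
      (nhds (n1 (i+2) (fun l => limP h x i l - Fseq h x i d l))) := by
    refine tendsto_finset_sum _ fun l _ => ?_
    exact ((H.tendsto_limP i l).sub tendsto_const_nhds).abs
  refine le_of_tendsto key ?_
  filter_upwards [Filter.eventually_ge_atTop d] with D hD
  exact H.diff_le hD

lemma limP_close (i : ℕ) :
    n1 (i+2) (fun l => limP h x i l - x i l) ≤ 2 * eps i := by
  simpa [Fseq] using H.limP_dist i 0

lemma limP_nonneg (i l : ℕ) : 0 ≤ limP h x i l := by
  refine ge_of_tendsto (H.tendsto_limP i l) (Filter.Eventually.of_forall fun d => ?_)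
  rcases Nat.eq_zero_or_pos d with rfl | hd
  · exact H.hx0 i l
  · obtain ⟨d', rfl⟩ := Nat.exists_eq_succ_of_ne_zero hd.ne'
    rw [Fseq, P_succ]
    exact (P_simplex H.hh i d' (ap_nonneg H.hh _ (H.hx0 _))
      (ap_simplex H.hh (i+d') (H.hx0 _) (H.hx1 _)).2).1 l

lemma limP_sum (i : ℕ) : ∑ l ∈ Finset.range (i+2), limP h x i l = 1 := by
  have key : Filter.Tendsto (fun d => ∑ l ∈ Finset.range (i+2), Fseq h x i d l)
      Filter.atTop (nhds (∑ l ∈ Finset.range (i+2), limP h x i l)) :=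
    tendsto_finset_sum _ fun l _ => H.tendsto_limP i l
  have hconst : ∀ d, ∑ l ∈ Finset.range (i+2), Fseq h x i d l = 1 := fun d =>
    (P_simplex H.hh i d (H.hx0 _) (H.hx1 _)).2
  refine tendsto_nhds_unique (key.congr' ?_) tendsto_const_nhds
  exact Filter.Eventually.of_forall hconst

lemma limP_supp (i l : ℕ) (hl : i+2 ≤ l) : limP h x i l = 0 := by
  have : Filter.Tendsto (fun d => Fseq h x i d l) Filter.atTop (nhds 0) := by
    refine tendsto_const_nhds.congr' (Filter.Eventually.of_forall fun d => ?_)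
    exact (H.Fseq_supp i d l hl).symm
  exact this.limUnder_eq

lemma limP_thread (i : ℕ) : limP h x i = ap h i (limP h x (i+1)) := by
  funext l
  have t1 : Filter.Tendsto (fun d => Fseq h x i (d+1) l) Filter.atTop
      (nhds (limP h x i l)) :=
    (H.tendsto_limP i l).comp (Filter.tendsto_add_atTop_nat 1)
  have t2 : Filter.Tendsto (fun d => Fseq h x i (d+1) l) Filter.atTop
      (nhds (ap h i (limP h x (i+1)) l)) := by
    have e1 : ∀ d, Fseq h x i (d+1) l = ∑ j ∈ Finset.range (i+3), h i l j * Fseq h x (i+1) d j := by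
      intro d
      rw [Fseq, P_succ_left, show i+(d+1) = (i+1)+d from by omega]
      rfl
    rw [show ap h i (limP h x (i+1)) l
        = ∑ j ∈ Finset.range (i+3), h i l j * limP h x (i+1) j from rfl]
    refine Filter.Tendsto.congr (fun d => (e1 d).symm) ?_
    exact tendsto_finset_sum _ fun j _ => (H.tendsto_limP (i+1) j).const_mul _
  exact tendsto_nhds_unique t1 t2

end Hyp


/-- replacing a thread by a nearby sequence: the exact composites converge back. -/
lemma tendsto_cross {g : ℕ → ℕ → ℕ → ℝ} {x z : ℕ → E} (hg : ColSys g)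
    (hxt : ∀ j, x j = ap g j (x (j+1))) (hxs : ∀ j l, j+2 ≤ l → x j l = 0)
    (hzs : ∀ j l, j+2 ≤ l → z j l = 0)
    (hz : ∀ j, n1 (j+2) (fun l => z j l - x j l) ≤ 2 * eps j) (i l : ℕ) :
    Filter.Tendsto (fun d => Fseq g z i d l) Filter.atTop (nhds (x i l)) := by
  rcases Nat.lt_or_ge l (i+2) with hl | hl
  · have hb : ∀ d, |Fseq g z i d l - x i l| ≤ 2 * eps (i+d) := by
      intro d
      rw [show x i l = P g i d (x (i+d)) l from (congrFun (P_thread hxt i d) l).symm]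
      refine le_trans (abs_le_n1 hl (fun l => Fseq g z i d l - P g i d (x (i+d)) l)) ?_
      rw [show (fun l => Fseq g z i d l - P g i d (x (i+d)) l)
          = fun l => P g i d (z (i+d)) l - P g i d (x (i+d)) l from rfl, P_sub]
      refine (n1_P_le hg i d _).trans ?_
      exact hz (i+d)
    have h0 : Filter.Tendsto (fun d => Fseq g z i d l - x i l) Filter.atTop (nhds 0) :=
      squeeze_zero_norm hb (tendsto_eps i 2)
    have := h0.add_const (x i l)
    simpa using this
  · refine tendsto_const_nhds.congr' (Filter.Eventually.of_forall fun d => ?_)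
    rcases Nat.eq_zero_or_pos d with rfl | hd
    · rw [show x i l = 0 from hxs i l hl]
      exact (hzs i l hl).symm
    · rw [show x i l = 0 from hxs i l hl]
      exact (P_supp hg i hd _ hl).symm

lemma limP_cross {g : ℕ → ℕ → ℕ → ℝ} {x z : ℕ → E} (hg : ColSys g)
    (hxt : ∀ j, x j = ap g j (x (j+1))) (hxs : ∀ j l, j+2 ≤ l → x j l = 0)
    (hzs : ∀ j l, j+2 ≤ l → z j l = 0)
    (hz : ∀ j, n1 (j+2) (fun l => z j l - x j l) ≤ 2 * eps j) (i : ℕ) :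
    limP g z i = x i := by
  funext l
  exact (tendsto_cross hg hxt hxs hzs hz i l).limUnder_eq

/-- affine combinations pass to `limP`. -/
lemma limP_comb {g h : ℕ → ℕ → ℕ → ℝ} {xx xy xz : ℕ → E}
    (Hx : Hyp g h xx) (Hy : Hyp g h xy) (t s : ℝ)
    (hcomb : ∀ j l, xz j l = t * xx j l + s * xy j l) (i l : ℕ) :
    limP h xz i l = t * limP h xx i l + s * limP h xy i l := by
  have e1 : ∀ d, Fseq h xz i d l = t * Fseq h xx i d l + s * Fseq h xy i d l := by
    intro d
    have : xz (i+d) = fun l => t * xx (i+d) l + s * xy (i+d) l := funext fun l => hcomb _ l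
    rw [Fseq, this, P_comb]
    rfl
  have t2 : Filter.Tendsto (fun d => Fseq h xz i d l) Filter.atTop
      (nhds (t * limP h xx i l + s * limP h xy i l)) := by
    refine Filter.Tendsto.congr (fun d => (e1 d).symm) ?_
    exact (((Hx.tendsto_limP i l).const_mul t).add ((Hy.tendsto_limP i l).const_mul s))
  exact t2.limUnder_eq


lemma ap_continuous (g) (i : ℕ) : Continuous (ap g i) := by
  refine continuous_pi fun l => ?_
  exact continuous_finset_sum _ fun j _ => continuous_const.mul (continuous_apply j)

lemma P_continuous (g) (i d : ℕ) : Continuous (P g i d) := by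
  induction d with
  | zero => exact continuous_id
  | succ d ih =>
      exact ih.comp (ap_continuous g (i+d))

/-- `limP` depends continuously on a parameter. -/
lemma limP_param_continuous {V : Type*} [TopologicalSpace V] {g h : ℕ → ℕ → ℕ → ℝ}
    {X : V → ℕ → E} (HX : ∀ v, Hyp g h (X v))
    (hXc : ∀ j l, Continuous fun v => X v j l) (i l : ℕ) :
    Continuous fun v => limP h (X v) i l := by
  have hunif : TendstoUniformly (fun d v => Fseq h (X v) i d l)
      (fun v => limP h (X v) i l) Filter.atTop := by
    rw [Metric.tendstoUniformly_iff]
    intro e he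
    have hev := Filter.Tendsto.eventually_lt_const he (tendsto_eps i 2)
    filter_upwards [hev] with d hd v
    refine lt_of_le_of_lt ?_ hd
    rcases Nat.lt_or_ge l (i+2) with hl | hl
    · rw [Real.dist_eq]
      exact le_trans (abs_le_n1 hl (fun l => limP h (X v) i l - Fseq h (X v) i d l))
        ((HX v).limP_dist i d)
    · rw [(HX v).limP_supp i l hl, (HX v).Fseq_supp i d l hl, dist_self]
      have := eps_pos (i+d)
      linarith
  refine hunif.continuous (Filter.Eventually.of_forall fun d => ?_).frequently
  have hc : Continuous fun v => X v (i+d) := continuous_pi fun l' => hXc (i+d) l'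
  exact ((continuous_apply l).comp ((P_continuous h i d).comp hc))

end Limit


/-! ### Rational approximation of a point in the simplex -/

lemma approx (m : ℕ) (hm : 1 ≤ m) (w : Fin m → ℝ) (h0 : ∀ l, 0 ≤ w l)
    (h1 : ∑ l, w l = 1) (k' q : ℕ) (hq0 : 0 < q) (hq : m * k' ≤ q) :
    ∃ c : Fin m → ℕ, (∀ l, k' ≤ c l) ∧ (∑ l, c l = q) ∧
      (∑ l, |(c l : ℝ)/q - w l|) ≤ (m*(k'+m) + m*k' : ℕ)/q := by
  set i0 : Fin m := ⟨0, hm⟩ with hi0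
  set Q : ℕ := q - m*k' with hQ
  set S : ℕ := ∑ l ∈ Finset.univ.erase i0, ⌊(Q:ℝ) * w l⌋₊ with hS
  have hflle : ∀ l, (⌊(Q:ℝ) * w l⌋₊ : ℝ) ≤ (Q:ℝ) * w l := fun l =>
    Nat.floor_le (mul_nonneg (Nat.cast_nonneg _) (h0 l))
  have hfllt : ∀ l, (Q:ℝ) * w l < ⌊(Q:ℝ) * w l⌋₊ + 1 := fun l =>
    Nat.lt_floor_add_one _
  have herase : ∑ l ∈ Finset.univ.erase i0, w l = 1 - w i0 := by
    have := Finset.sum_erase_add Finset.univ w (Finset.mem_univ i0)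
    rw [h1] at this
    linarith
  have hSQR : (S:ℝ) ≤ (Q:ℝ) := by
    rw [hS]
    push_cast
    calc ∑ l ∈ Finset.univ.erase i0, (⌊(Q:ℝ) * w l⌋₊ : ℝ)
        ≤ ∑ l ∈ Finset.univ.erase i0, (Q:ℝ) * w l :=
          Finset.sum_le_sum fun l _ => hflle l
      _ = (Q:ℝ) * (1 - w i0) := by rw [← Finset.mul_sum, herase]
      _ ≤ (Q:ℝ) * 1 := by
          refine mul_le_mul_of_nonneg_left (by linarith [h0 i0]) (by positivity)
      _ = (Q:ℝ) := mul_one _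
  have hSQ : S ≤ Q := Nat.cast_le.mp hSQR
  set a : Fin m → ℕ := fun l => if l = i0 then Q - S else ⌊(Q:ℝ) * w l⌋₊ with ha
  refine ⟨fun l => k' + a l, fun l => Nat.le_add_right _ _, ?_, ?_⟩
  · have hsuma : ∑ l, a l = Q := by
      rw [← Finset.sum_erase_add Finset.univ a (Finset.mem_univ i0)]
      have e1 : ∑ l ∈ Finset.univ.erase i0, a l = S := by
        refine Finset.sum_congr rfl fun l hl => ?_
        rw [ha]
        simp only [if_neg (Finset.ne_of_mem_erase hl)]
      have e0 : a i0 = Q - S := by rw [ha]; simp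
      rw [e1, e0]
      omega
    rw [Finset.sum_add_distrib, hsuma, Finset.sum_const, Finset.card_univ, Fintype.card_fin,
      smul_eq_mul]
    omega
  · -- error bound
    have hqR : (0:ℝ) < q := by exact_mod_cast hq0
    have hcast : (q:ℝ) = (Q:ℝ) + m*k' := by
      rw [hQ]
      push_cast [Nat.cast_sub hq]
      ring
    have hbound : ∀ l, |((k' + a l : ℕ) : ℝ)/q - w l| ≤ ((k':ℝ) + m + m*k'*w l)/q := by
      intro l
      rw [div_sub' hqR.ne', abs_div, abs_of_pos hqR]
      refine div_le_div_of_nonneg_right ?_ hqR.le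
      -- |(k' + a l) - q * w l| ≤ k' + m + m*k'*w l
      have hB : -1 ≤ (a l : ℝ) - (Q:ℝ) * w l ∧ (a l : ℝ) - (Q:ℝ) * w l ≤ m := by
        rcases eq_or_ne l i0 with rfl | hne
        · have e0 : a i0 = Q - S := by simp [ha]
          have e2 : ((Q - S : ℕ) : ℝ) = (Q:ℝ) - S := by
            push_cast [Nat.cast_sub hSQ]; ring
          have hSR : (S:ℝ) = ∑ l' ∈ Finset.univ.erase i0, (⌊(Q:ℝ) * w l'⌋₊ : ℝ) := by
            rw [hS]; push_cast; rfl
          have e3 : (Q:ℝ) - (S:ℝ) - (Q:ℝ) * w i0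
              = ∑ l' ∈ Finset.univ.erase i0, ((Q:ℝ) * w l' - ⌊(Q:ℝ) * w l'⌋₊) := by
            rw [Finset.sum_sub_distrib, ← Finset.mul_sum, herase, ← hSR]
            ring
          rw [e0, e2, e3]
          constructor
          · refine le_trans (by norm_num) (Finset.sum_nonneg fun l' _ => ?_)
            linarith [hflle l']
          · calc ∑ l' ∈ Finset.univ.erase i0, ((Q:ℝ) * w l' - ⌊(Q:ℝ) * w l'⌋₊)
                ≤ ∑ l' ∈ Finset.univ.erase i0, (1:ℝ) :=
                  Finset.sum_le_sum fun l' _ => by linarith [hfllt l']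
              _ ≤ m := by
                  rw [Finset.sum_const, nsmul_eq_mul, mul_one]
                  have : (Finset.univ.erase i0).card ≤ m := by
                    refine le_trans (Finset.card_le_card (Finset.erase_subset _ _)) ?_
                    simp
                  exact_mod_cast this
        · have e0 : a l = ⌊(Q:ℝ) * w l⌋₊ := by simp [ha, hne]
          rw [e0]
          exact ⟨by linarith [hfllt l], by
            have hm1 : (1:ℝ) ≤ m := by exact_mod_cast hm
            linarith [hflle l]⟩
      have hw := h0 l
      have hk : (0:ℝ) ≤ k' := Nat.cast_nonneg _
      have hmR : (1:ℝ) ≤ m := by exact_mod_cast hm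
      have e4 : ((k' + a l : ℕ) : ℝ) - (q:ℝ) * w l
          = (k':ℝ) + ((a l : ℝ) - (Q:ℝ) * w l) - m*k'*w l := by
        push_cast
        rw [hcast]
        ring
      have hmkw : (0:ℝ) ≤ (m:ℝ)*(k':ℝ)*w l := by positivity
      rw [e4, abs_le]
      constructor
      · nlinarith [hB.1]
      · nlinarith [hB.2]
    calc ∑ l, |((k' + a l : ℕ) : ℝ)/q - w l|
        ≤ ∑ l : Fin m, ((k':ℝ) + m + m*k'*w l)/q := Finset.sum_le_sum fun l _ => hbound l
      _ = ((m*(k'+m) + m*k' : ℕ) : ℝ)/q := by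
          rw [← Finset.sum_div]
          congr 1
          rw [Finset.sum_add_distrib, Finset.sum_const, Finset.card_univ, Fintype.card_fin,
            ← Finset.mul_sum, h1]
          push_cast
          ring


/-! ### Extension by zero, linear maps as matrices -/

def extF {n : ℕ} (u : Fin n → ℝ) : E := fun l => if h : l < n then u ⟨l, h⟩ else 0

lemma extF_lt {n : ℕ} (u : Fin n → ℝ) {l : ℕ} (h : l < n) : extF u l = u ⟨l, h⟩ := dif_pos h

lemma extF_apply_fin {n : ℕ} (u : Fin n → ℝ) (l : Fin n) : extF u ↑l = u l := by
  rw [extF_lt u l.isLt]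

lemma extF_ge {n : ℕ} (u : Fin n → ℝ) {l : ℕ} (h : n ≤ l) : extF u l = 0 :=
  dif_neg (by omega)

lemma sum_range_fin (n : ℕ) (F : Fin n → ℝ) (G : ℕ → ℝ)
    (hG : ∀ (j : ℕ) (h : j < n), G j = F ⟨j, h⟩) :
    ∑ j ∈ Finset.range n, G j = ∑ j : Fin n, F j := by
  rw [← Fin.sum_univ_eq_sum_range G n]
  refine Finset.sum_congr rfl fun j _ => ?_
  rw [hG ↑j j.isLt]

lemma extF_sum {n : ℕ} (u : Fin n → ℝ) :
    ∑ l ∈ Finset.range n, extF u l = ∑ l, u l :=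
  sum_range_fin n u (extF u) fun j h => extF_lt u h

lemma extF_continuous {n : ℕ} (l : ℕ) : Continuous fun u : Fin n → ℝ => extF u l := by
  unfold extF
  split_ifs with h
  · exact continuous_apply _
  · exact continuous_const

lemma single_mem_simplex (n : ℕ) (j : Fin (n+1)) :
    Pi.single j (1:ℝ) ∈ simplexSet (n+1) 1 := by
  constructor
  · intro i
    rcases eq_or_ne i j with rfl | hne
    · simp
    · simp [Pi.single_apply, hne]
  · simp

lemma lin_apply {a b : ℕ} (f : (Fin a → ℝ) →ₗ[ℝ] (Fin b → ℝ)) (u : Fin a → ℝ) (l : Fin b) :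
    f u l = ∑ j, f (Pi.single j 1) l * u j := by
  have h1 : u = ∑ j, u j • (Pi.single j 1 : Fin a → ℝ) := by
    funext x
    rw [Finset.sum_apply]
    simp [Pi.single_apply, Finset.sum_ite_eq' Finset.univ x u]
  conv_lhs => rw [h1, map_sum]
  rw [Finset.sum_apply]
  refine Finset.sum_congr rfl fun j _ => ?_
  rw [map_smul]
  simp [mul_comm]

/-! ### Growth of the sequence p -/

lemma p_dvd_le (p : ℕ → ℕ) (hpdvd : ∀ n, p n ∣ p (n+1)) {a b : ℕ} (hab : a ≤ b) :
    p a ∣ p b := by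
  induction b with
  | zero => obtain rfl : a = 0 := Nat.le_zero.1 hab; rfl
  | succ b ih =>
      rcases Nat.lt_or_ge a (b+1) with h | h
      · exact (ih (Nat.lt_succ_iff.1 h)).trans (hpdvd b)
      · obtain rfl : a = b+1 := le_antisymm hab h
        rfl

lemma p_growth (p : ℕ → ℕ) (hp0 : ∀ n, 0 < p n) (hpmono : StrictMono p)
    (hpdvd : ∀ n, p n ∣ p (n+1)) (a g : ℕ) : p a * 2^g ≤ p (a+g) := by
  induction g with
  | zero => simp
  | succ g ih =>
      have h1 : p (a+g) * 2 ≤ p (a+g+1) := by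
        obtain ⟨d, hd⟩ := hpdvd (a+g)
        have hd2 : 2 ≤ d := by
          rcases Nat.lt_or_ge d 2 with h | h
          · interval_cases d
            · exfalso; have := hp0 (a+g+1); omega
            · exfalso
              have := hpmono (show a+g < a+g+1 by omega)
              omega
          · exact h
        calc p (a+g) * 2 ≤ p (a+g) * d := Nat.mul_le_mul_left _ hd2
          _ = p (a+g+1) := hd.symm
      calc p a * 2^(g+1) = (p a * 2^g) * 2 := by ring
        _ ≤ p (a+g) * 2 := Nat.mul_le_mul_right _ ih
        _ ≤ p (a+(g+1)) := h1

/-- required lower bound for the `i`-th denominator -/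
def NB (i : ℕ) : ℕ := ((i+2)*((i+3)+(i+2)) + (i+2)*(i+3)) * 2^i

lemma NB_pos (i : ℕ) : 0 < NB i :=
  Nat.mul_pos (by positivity) (Nat.pow_pos (by norm_num))

/-- the subsequence -/
def niF : ℕ → ℕ
  | 0 => 0
  | i+1 => niF i + NB i


/-! ### The two column systems and the maps between the inverse limits -/

section Maps

variable (A : ∀ n : ℕ, (Fin (n + 2) → ℝ) →ₗ[ℝ] (Fin (n + 1) → ℝ))
variable (c : ∀ i : ℕ, Fin (i+3) → Fin (i+2) → ℕ) (q P : ℕ → ℕ)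

/-- ℕ-indexed entries of the matrices of the maps `A` -/
def aE : ℕ → ℕ → ℕ → ℝ := fun i l j =>
  if h : j < i+3 then extF (fun l' : Fin (i+2) => A (i+1) (Pi.single ⟨j, h⟩ 1) l') l else 0

/-- ℕ-indexed entries of the rational approximating matrices -/
def bE : ℕ → ℕ → ℕ → ℝ := fun i l j =>
  if h : j < i+3 then extF (fun l' : Fin (i+2) => (c i ⟨j, h⟩ l' : ℝ) / q i) l else 0

lemma aE_eq (i : ℕ) {l j : ℕ} (hl : l < i+2) (hj : j < i+3) :
    aE A i l j = A (i+1) (Pi.single ⟨j, hj⟩ 1) ⟨l, hl⟩ := by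
  rw [aE, dif_pos hj, extF_lt _ hl]

lemma bE_eq (i : ℕ) {l j : ℕ} (hl : l < i+2) (hj : j < i+3) :
    bE c q i l j = (c i ⟨j, hj⟩ ⟨l, hl⟩ : ℝ) / q i := by
  rw [bE, dif_pos hj, extF_lt _ hl]

lemma colsys_aE
    (hcol : ∀ i (j : Fin (i+3)), (∀ l, 0 ≤ A (i+1) (Pi.single j 1) l) ∧
      ∑ l, A (i+1) (Pi.single j 1) l = 1) : ColSys (aE A) := by
  constructor
  · intro i l j h
    rw [aE]
    split_ifs with hj
    · exact extF_ge _ (by omega)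
    · rfl
  · intro i l j
    rw [aE]
    split_ifs with hj
    · rw [extF]
      split_ifs with hl
      · exact (hcol i ⟨j, hj⟩).1 _
      · exact le_refl 0
    · exact le_refl 0
  · intro i j hj
    have e1 : ∀ l ∈ Finset.range (i+2), aE A i l j
        = extF (fun l' : Fin (i+2) => A (i+1) (Pi.single ⟨j, hj⟩ 1) l') l := fun l _ => by
      rw [aE, dif_pos hj]
    rw [Finset.sum_congr rfl e1, extF_sum]
    exact (hcol i ⟨j, hj⟩).2

lemma colsys_bE (hq0 : ∀ i, 0 < q i)
    (hsum : ∀ i (j : Fin (i+3)), ∑ l, c i j l = q i) : ColSys (bE c q) := by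
  constructor
  · intro i l j h
    rw [bE]
    split_ifs with hj
    · exact extF_ge _ (by omega)
    · rfl
  · intro i l j
    rw [bE]
    split_ifs with hj
    · rw [extF]
      split_ifs with hl
      · positivity
      · exact le_refl 0
    · exact le_refl 0
  · intro i j hj
    have e1 : ∀ l ∈ Finset.range (i+2), bE c q i l j
        = extF (fun l' : Fin (i+2) => (c i ⟨j, hj⟩ l' : ℝ) / q i) l := fun l _ => by
      rw [bE, dif_pos hj]
    rw [Finset.sum_congr rfl e1, extF_sum, ← Finset.sum_div]
    rw [show ∑ l : Fin (i+2), (c i ⟨j, hj⟩ l : ℝ) = ((q i : ℕ) : ℝ) from by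
      exact_mod_cast congrArg (Nat.cast (R := ℝ)) (hsum i ⟨j, hj⟩)]
    exact div_self (by exact_mod_cast (hq0 i).ne')

lemma close_ab
    (hc3 : ∀ i (j : Fin (i+3)),
      (∑ l, |(c i j l : ℝ)/(q i) - A (i+1) (Pi.single j 1) l|) ≤ eps i) :
    ∀ i, ∀ j < i+3, ∑ l ∈ Finset.range (i+2), |aE A i l j - bE c q i l j| ≤ eps i := by
  intro i j hj
  have e1 : ∑ l ∈ Finset.range (i+2), |aE A i l j - bE c q i l j|
      = ∑ l : Fin (i+2), |(c i ⟨j, hj⟩ l : ℝ)/(q i) - A (i+1) (Pi.single ⟨j, hj⟩ 1) l| := by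
    refine sum_range_fin _ _ _ fun l hl => ?_
    rw [aE_eq A i hl hj, bE_eq c q i hl hj, abs_sub_comm]
  rw [e1]
  exact hc3 i ⟨j, hj⟩

/-- the thread associated to an element of `K` -/
def xvF (v : ∀ n : ℕ, Fin (n+1) → ℝ) : ℕ → E := fun j => extF (v (j+1))

/-- the (rescaled) thread associated to an element of the target inverse limit -/
def zwF (w : ∀ i : ℕ, Fin (i+2) → ℝ) : ℕ → E := fun j l => (P j : ℝ) * extF (w j) l

/-- the forward map -/
def fmapF (v : ∀ n : ℕ, Fin (n+1) → ℝ) : ∀ i : ℕ, Fin (i+2) → ℝ :=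
  fun i l => limP (bE c q) (xvF v) i ↑l / P i

/-- the inverse map -/
def gmapF (w : ∀ i : ℕ, Fin (i+2) → ℝ) : ∀ n : ℕ, Fin (n+1) → ℝ
  | 0 => A 0 (fun l : Fin 2 => limP (aE A) (zwF P w) 0 ↑l)
  | Nat.succ m => fun l => limP (aE A) (zwF P w) m ↑l


lemma hyp_xv (hcsA : ColSys (aE A)) (hcsB : ColSys (bE c q))
    (hclose : ∀ i, ∀ j < i+3, ∑ l ∈ Finset.range (i+2), |aE A i l j - bE c q i l j| ≤ eps i)
    (v : ∀ n : ℕ, Fin (n+1) → ℝ)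
    (hv1 : ∀ n, v n ∈ simplexSet (n+1) 1) (hv2 : ∀ n, v n = A n (v (n+1))) :
    Hyp (aE A) (bE c q) (xvF v) := by
  constructor
  · exact hcsA
  · exact hcsB
  · exact hclose
  · intro j l
    rw [xvF, extF]
    split_ifs with h
    · exact (hv1 (j+1)).1 _
    · exact le_refl 0
  · intro j
    rw [xvF, extF_sum]
    have := (hv1 (j+1)).2
    simpa using this
  · intro j l hl
    exact extF_ge _ hl
  · intro j
    funext l
    rcases Nat.lt_or_ge l (j+2) with hl | hl
    · rw [xvF, extF_lt _ hl]
      rw [show v (j+1) ⟨l, hl⟩ = A (j+1) (v (j+2)) ⟨l, hl⟩ from congrFun (hv2 (j+1)) _]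
      rw [lin_apply]
      refine (sum_range_fin (j+3)
        (fun j'' : Fin (j+3) => A (j+1) (Pi.single j'' 1) ⟨l, hl⟩ * v (j+2) j'')
        _ fun j' hj' => ?_).symm
      rw [aE_eq A j hl hj', xvF, extF_lt _ hj']
    · rw [xvF, extF_ge _ hl]
      exact (ap_supp hcsA j _ hl).symm

lemma hyp_zw (hcsA : ColSys (aE A)) (hcsB : ColSys (bE c q))
    (hclose : ∀ i, ∀ j < i+3, ∑ l ∈ Finset.range (i+2), |aE A i l j - bE c q i l j| ≤ eps i)
    (hq0 : ∀ i, 0 < q i) (hP0 : ∀ i, 0 < P i) (hqmul : ∀ i, P i * q i = P (i+1))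
    (w : ∀ i : ℕ, Fin (i+2) → ℝ)
    (hw1 : ∀ i, w i ∈ simplexSet (i+2) (P i))
    (hw2 : ∀ i (l : Fin (i+2)), w i l = ∑ j' : Fin (i+3), (c i j' l : ℝ) * w (i+1) j') :
    Hyp (bE c q) (aE A) (zwF P w) := by
  constructor
  · exact hcsB
  · exact hcsA
  · intro i j hj
    rw [show ∑ l ∈ Finset.range (i+2), |bE c q i l j - aE A i l j|
        = ∑ l ∈ Finset.range (i+2), |aE A i l j - bE c q i l j| from
      Finset.sum_congr rfl fun l _ => abs_sub_comm _ _]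
    exact hclose i j hj
  · intro j l
    rw [zwF]
    refine mul_nonneg (Nat.cast_nonneg _) ?_
    rw [extF]
    split_ifs with h
    · exact (hw1 j).1 _
    · exact le_refl 0
  · intro j
    simp only [zwF]
    rw [← Finset.mul_sum, extF_sum, (hw1 j).2, mul_one_div]
    exact div_self (by exact_mod_cast (hP0 j).ne')
  · intro j l hl
    rw [zwF, extF_ge _ hl, mul_zero]
  · intro j
    funext l
    rcases Nat.lt_or_ge l (j+2) with hl | hl
    · rw [zwF, extF_lt _ hl]
      rw [show w j ⟨l, hl⟩ = ∑ j' : Fin (j+3), (c j j' ⟨l, hl⟩ : ℝ) * w (j+1) j' from hw2 j _]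
      rw [Finset.mul_sum]
      refine (sum_range_fin (j+3)
        (fun j'' : Fin (j+3) => (P j : ℝ) * ((c j j'' ⟨l, hl⟩ : ℝ) * w (j+1) j''))
        _ fun j' hj' => ?_).symm
      rw [bE_eq c q j hl hj', zwF, extF_lt _ hj']
      have hPq : (P (j+1) : ℝ) = (P j : ℝ) * (q j : ℝ) := by
        exact_mod_cast (hqmul j).symm
      rw [hPq]
      have hqne : (q j : ℝ) ≠ 0 := by exact_mod_cast (hq0 j).ne'
      field_simp
    · rw [zwF, extF_ge _ hl, mul_zero]
      exact (ap_supp hcsB j _ hl).symm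

end Maps


lemma base_le_NB (i : ℕ) : (i+2)*((i+3)+(i+2)) + (i+2)*(i+3) ≤ NB i := by
  have h1 : 1 ≤ 2^i := Nat.one_le_two_pow
  calc (i+2)*((i+3)+(i+2)) + (i+2)*(i+3)
      = ((i+2)*((i+3)+(i+2)) + (i+2)*(i+3)) * 1 := by ring
    _ ≤ ((i+2)*((i+3)+(i+2)) + (i+2)*(i+3)) * 2^i := Nat.mul_le_mul_left _ h1

end
end Stmt15aux

open Stmt15aux in
/-- `K` is an infinite dimensional metrizable Choquet simplex, presented
(by the Lazar–Lindenstrauss theorem) as the inverse limit of unit simplices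
`Δ(n+1,1)` along surjective linear maps `A n : Δ(n+2,1) → Δ(n+1,1)`. -/
theorem stmt15
    (A : ∀ n : ℕ, (Fin (n + 2) → ℝ) →ₗ[ℝ] (Fin (n + 1) → ℝ))
    (hA : ∀ n, A n '' simplexSet (n + 2) 1 = simplexSet (n + 1) 1)
    (K : Set (∀ n : ℕ, Fin (n + 1) → ℝ))
    (hK : K = {v | (∀ n, v n ∈ simplexSet (n + 1) 1) ∧ ∀ n, v n = A n (v (n + 1))})
    (p : ℕ → ℕ) (hp0 : ∀ n, 0 < p n) (hpmono : StrictMono p)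
    (hpdvd : ∀ n, p n ∣ p (n + 1)) :
    ∃ (ni : ℕ → ℕ) (k : ℕ → ℕ) (M : ∀ i, Matrix (Fin (k i)) (Fin (k (i + 1))) ℤ),
      StrictMono ni ∧
      IsManaged (fun i => p (ni i)) k M ∧
      (∀ i (l : Fin (k i)) (j : Fin (k (i + 1))), (k (i + 1) : ℤ) ≤ M i l j) ∧
      AffinelyHomeomorphic K
        {v : ∀ i : ℕ, Fin (k i) → ℝ |
          (∀ i, v i ∈ simplexSet (k i) (p (ni i))) ∧
          ∀ i, v i = ((M i).map (Int.cast : ℤ → ℝ)).mulVec (v (i + 1))} := by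
  subst hK
  set P : ℕ → ℕ := fun i => p (niF i) with hP
  have hniF_mono : StrictMono niF := strictMono_nat_of_lt_succ fun i => by
    have := NB_pos i
    show niF i < niF i + NB i
    omega
  have hdvd : ∀ i, P i ∣ P (i+1) := fun i =>
    p_dvd_le p hpdvd (show niF i ≤ niF (i+1) from Nat.le_add_right _ _)
  set q : ℕ → ℕ := fun i => p (niF (i+1)) / p (niF i) with hq
  have hqmul : ∀ i, P i * q i = P (i+1) := fun i => Nat.mul_div_cancel' (hdvd i)
  have hP0 : ∀ i, 0 < P i := fun i => hp0 _
  have hqge : ∀ i, NB i ≤ q i := by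
    intro i
    have h1 : P i * 2^(NB i) ≤ P (i+1) :=
      p_growth p hp0 hpmono hpdvd (niF i) (NB i)
    rw [← hqmul i] at h1
    have h2 : 2^(NB i) ≤ q i := Nat.le_of_mul_le_mul_left h1 (hP0 i)
    exact le_trans (show NB i < 2^(NB i) from Nat.lt_two_pow_self).le h2
  have hq0 : ∀ i, 0 < q i := fun i => lt_of_lt_of_le (NB_pos i) (hqge i)
  have hcolA : ∀ i (j : Fin (i+3)), A (i+1) (Pi.single j 1) ∈ simplexSet (i+2) 1 := by
    intro i j
    rw [← hA (i+1)]
    exact ⟨Pi.single j 1, single_mem_simplex (i+2) j, rfl⟩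
  have hcol : ∀ i (j : Fin (i+3)), (∀ l, 0 ≤ A (i+1) (Pi.single j 1) l) ∧
      ∑ l, A (i+1) (Pi.single j 1) l = 1 := by
    intro i j
    obtain ⟨h1, h2⟩ := hcolA i j
    exact ⟨h1, by simpa using h2⟩
  have hex : ∀ i (j : Fin (i+3)), ∃ cc : Fin (i+2) → ℕ, (∀ l, i+3 ≤ cc l) ∧
      (∑ l, cc l = q i) ∧
      (∑ l, |(cc l : ℝ)/(q i) - A (i+1) (Pi.single j 1) l|) ≤ eps i := by
    intro i j
    have hqbig : (i+2) * (i+3) ≤ q i := by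
      refine le_trans ?_ (le_trans (base_le_NB i) (hqge i))
      nlinarith
    obtain ⟨cc, h1, h2, h3⟩ := approx (i+2) (by omega) (A (i+1) (Pi.single j 1))
      (hcol i j).1 (hcol i j).2 (i+3) (q i) (hq0 i) hqbig
    refine ⟨cc, h1, h2, le_trans h3 ?_⟩
    -- cast bound
    have hqR : (0:ℝ) < q i := by exact_mod_cast hq0 i
    have hcast : (((i+2)*((i+3)+(i+2)) + (i+2)*(i+3) : ℕ) : ℝ) * 2^i ≤ q i := by
      have hNB : NB i ≤ q i := hqge i
      have : (NB i : ℝ) ≤ q i := by exact_mod_cast hNB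
      rw [NB] at this
      push_cast at this ⊢
      linarith
    rw [div_le_iff₀ hqR]
    have h2i : ((1:ℝ)/2)^i * 2^i = 1 := by
      rw [← mul_pow]
      norm_num
    have hbase0 : (0:ℝ) ≤ (((i+2)*((i+3)+(i+2)) + (i+2)*(i+3) : ℕ) : ℝ) := Nat.cast_nonneg _
    calc (((i+2)*((i+3)+(i+2)) + (i+2)*(i+3) : ℕ) : ℝ)
        = (((i+2)*((i+3)+(i+2)) + (i+2)*(i+3) : ℕ) : ℝ) * 2^i * (1/2)^i := by
          rw [mul_assoc, mul_comm ((2:ℝ)^i), h2i, mul_one]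
      _ ≤ (q i : ℝ) * (1/2)^i := by
          refine mul_le_mul_of_nonneg_right hcast (by positivity)
      _ = eps i * q i := by rw [eps]; ring
  choose c hc1 hc2 hc3 using hex
  have hcsA : ColSys (aE A) := colsys_aE A hcol
  have hcsB : ColSys (bE c q) := colsys_bE c q hq0 hc2
  have hclose := close_ab A c q hc3
  refine ⟨niF, fun i => i+2, fun i => Matrix.of (fun l j => (c i j l : ℤ)),
    hniF_mono, ?_, ?_, ?_⟩
  · refine ⟨fun i => hP0 i, fun a b hab => hpmono (hniF_mono hab), hdvd,
      fun i => by show 2 ≤ i+2; omega, ?_, ?_⟩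
    · intro n i j
      have h := hc1 n j i
      show (0:ℤ) < ((c n j i : ℕ) : ℤ)
      exact_mod_cast (by omega : 0 < c n j i)
    · intro n j
      have h1 : (∑ i : Fin (n+2), ((c n j i : ℕ) : ℤ)) = ((q n : ℕ) : ℤ) := by
        exact_mod_cast congrArg (Nat.cast (R := ℤ)) (hc2 n j)
      show (∑ i : Fin (n+2), ((c n j i : ℕ) : ℤ)) * ((P n : ℕ) : ℤ) = ((P (n+1) : ℕ) : ℤ)
      rw [h1, ← hqmul n]
      push_cast
      ring
  · intro i l j
    have h := hc1 i j l
    show ((i+3 : ℕ) : ℤ) ≤ ((c i j l : ℕ) : ℤ)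
    exact_mod_cast h
  · -- the affine homeomorphism
    have hmulVec : ∀ (w : ∀ i : ℕ, Fin (i+2) → ℝ) (i : ℕ) (l : Fin (i+2)),
        (((Matrix.of (fun l j => ((c i j l : ℕ) : ℤ))).map (Int.cast : ℤ → ℝ)).mulVec (w (i+1))) l
          = ∑ j' : Fin (i+3), (c i j' l : ℝ) * w (i+1) j' := by
      intro w i l
      simp [Matrix.mulVec, dotProduct, Matrix.map_apply]
    have Hv : ∀ v, (∀ n, v n ∈ simplexSet (n + 1) 1) → (∀ n, v n = A n (v (n + 1))) →
        Hyp (aE A) (bE c q) (xvF v) := fun v h1 h2 => hyp_xv A c q hcsA hcsB hclose v h1 h2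
    have Hw : ∀ w, (∀ i, w i ∈ simplexSet (i+2) (P i)) →
        (∀ i (l : Fin (i+2)), w i l = ∑ j' : Fin (i+3), (c i j' l : ℝ) * w (i+1) j') →
        Hyp (bE c q) (aE A) (zwF P w) :=
      fun w h1 h2 => hyp_zw A c q P hcsA hcsB hclose hq0 hP0 hqmul w h1 h2
    -- the forward map lands in the target set
    have fmem1 : ∀ v, (∀ n, v n ∈ simplexSet (n + 1) 1) → (∀ n, v n = A n (v (n + 1))) →
        ∀ i, fmapF c q P v i ∈ simplexSet (i+2) (P i) := by
      intro v h1 h2 i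
      have H := Hv v h1 h2
      constructor
      · intro l
        exact div_nonneg (H.limP_nonneg i ↑l) (Nat.cast_nonneg _)
      · rw [show (∑ l : Fin (i+2), fmapF c q P v i l)
            = (∑ l : Fin (i+2), limP (bE c q) (xvF v) i ↑l) / P i from by
          rw [Finset.sum_div]; rfl]
        rw [Fin.sum_univ_eq_sum_range (fun l => limP (bE c q) (xvF v) i l) (i+2),
          H.limP_sum i]
    have fmem2 : ∀ v, (∀ n, v n ∈ simplexSet (n + 1) 1) → (∀ n, v n = A n (v (n + 1))) →
        ∀ i (l : Fin (i+2)), fmapF c q P v i l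
          = ∑ j' : Fin (i+3), (c i j' l : ℝ) * fmapF c q P v (i+1) j' := by
      intro v h1 h2 i l
      have H := Hv v h1 h2
      show limP (bE c q) (xvF v) i ↑l / P i = _
      rw [congrFun (H.limP_thread i) ↑l]
      rw [show ap (bE c q) i (limP (bE c q) (xvF v) (i+1)) ↑l
          = ∑ j' : Fin (i+3), (c i j' l : ℝ)/(q i) * limP (bE c q) (xvF v) (i+1) ↑j' from by
        refine sum_range_fin (i+3) _ _ fun j' hj' => ?_
        rw [bE_eq c q i l.isLt hj']]
      rw [Finset.sum_div]
      refine Finset.sum_congr rfl fun j' _ => ?_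
      show (c i j' l : ℝ)/(q i) * limP (bE c q) (xvF v) (i+1) ↑j' / P i
          = (c i j' l : ℝ) * (limP (bE c q) (xvF v) (i+1) ↑j' / P (i+1))
      have hPq : (P (i+1) : ℝ) = (P i : ℝ) * q i := by exact_mod_cast (hqmul i).symm
      have hqne : (q i : ℝ) ≠ 0 := by exact_mod_cast (hq0 i).ne'
      have hPne : (P i : ℝ) ≠ 0 := by exact_mod_cast (hP0 i).ne'
      rw [hPq, div_mul_eq_mul_div, div_div, ← mul_div_assoc,
        mul_comm ((q i : ℝ)) ((P i : ℝ))]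
    -- the inverse map: thread property
    have gthread : ∀ w, (∀ i, w i ∈ simplexSet (i+2) (P i)) →
        (∀ i (l : Fin (i+2)), w i l = ∑ j' : Fin (i+3), (c i j' l : ℝ) * w (i+1) j') →
        ∀ n, gmapF A P w n = A n (gmapF A P w (n+1)) := by
      intro w h1 h2 n
      have H := Hw w h1 h2
      cases n with
      | zero => rfl
      | succ m =>
          funext l
          show limP (aE A) (zwF P w) m ↑l = A (m+1) (gmapF A P w (m+2)) l
          rw [congrFun (H.limP_thread m) ↑l, lin_apply (A (m+1)) (gmapF A P w (m+2)) l]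
          refine sum_range_fin (m+3)
            (fun j'' : Fin (m+3) => A (m+1) (Pi.single j'' 1) l * gmapF A P w (m+2) j'')
            _ fun j' hj' => ?_
          rw [aE_eq A m l.isLt hj']
          rfl
    have gmemsucc : ∀ w, (∀ i, w i ∈ simplexSet (i+2) (P i)) →
        (∀ i (l : Fin (i+2)), w i l = ∑ j' : Fin (i+3), (c i j' l : ℝ) * w (i+1) j') →
        ∀ m, gmapF A P w (m+1) ∈ simplexSet (m+2) 1 := by
      intro w h1 h2 m
      have H := Hw w h1 h2
      refine ⟨fun l => H.limP_nonneg m ↑l, ?_⟩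
      rw [show (∑ l : Fin (m+2), gmapF A P w (m+1) l)
          = ∑ l : Fin (m+2), limP (aE A) (zwF P w) m ↑l from rfl]
      rw [Fin.sum_univ_eq_sum_range (fun l => limP (aE A) (zwF P w) m l) (m+2),
        H.limP_sum m]
      norm_num
    have gmem1 : ∀ w, (∀ i, w i ∈ simplexSet (i+2) (P i)) →
        (∀ i (l : Fin (i+2)), w i l = ∑ j' : Fin (i+3), (c i j' l : ℝ) * w (i+1) j') →
        ∀ n, gmapF A P w n ∈ simplexSet (n+1) 1 := by
      intro w h1 h2 n
      cases n with
      | zero =>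
          rw [show gmapF A P w 0 = A 0 (gmapF A P w 1) from gthread w h1 h2 0]
          rw [← hA 0]
          exact ⟨gmapF A P w 1, gmemsucc w h1 h2 0, rfl⟩
      | succ m => exact gmemsucc w h1 h2 m
    -- the two maps are inverse to each other
    have hgf : ∀ v, (∀ n, v n ∈ simplexSet (n + 1) 1) → (∀ n, v n = A n (v (n + 1))) →
        gmapF A P (fmapF c q P v) = v := by
      intro v h1 h2
      have H := Hv v h1 h2
      have hz : zwF P (fmapF c q P v) = fun j => limP (bE c q) (xvF v) j := by
        funext j l
        rcases Nat.lt_or_ge l (j+2) with hl | hl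
        · rw [zwF, extF_lt _ hl]
          show (P j : ℝ) * (limP (bE c q) (xvF v) j ↑(⟨l, hl⟩ : Fin (j+2)) / P j) = _
          have hPne : (P j : ℝ) ≠ 0 := by exact_mod_cast (hP0 j).ne'
          rw [mul_div_cancel₀ _ hPne]
        · rw [zwF, extF_ge _ hl, mul_zero, H.limP_supp j l hl]
      have hcross : ∀ n, limP (aE A) (zwF P (fmapF c q P v)) n = xvF v n := by
        rw [hz]
        exact limP_cross hcsA H.hxt H.hxs (fun j l hl => H.limP_supp j l hl)
          (fun j => H.limP_close j)
      funext n
      cases n with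
      | zero =>
          show A 0 (fun l : Fin 2 => limP (aE A) (zwF P (fmapF c q P v)) 0 ↑l) = v 0
          rw [show (fun l : Fin 2 => limP (aE A) (zwF P (fmapF c q P v)) 0 ↑l) = v 1 from by
            funext l
            rw [congrFun (hcross 0) ↑l]
            exact extF_apply_fin (v 1) l]
          exact (h2 0).symm
      | succ m =>
          funext l
          show limP (aE A) (zwF P (fmapF c q P v)) m ↑l = v (m+1) l
          rw [congrFun (hcross m) ↑l]
          exact extF_apply_fin (v (m+1)) l
    have hfg : ∀ w, (∀ i, w i ∈ simplexSet (i+2) (P i)) →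
        (∀ i (l : Fin (i+2)), w i l = ∑ j' : Fin (i+3), (c i j' l : ℝ) * w (i+1) j') →
        fmapF c q P (gmapF A P w) = w := by
      intro w h1 h2
      have H := Hw w h1 h2
      have hx : xvF (gmapF A P w) = fun j => limP (aE A) (zwF P w) j := by
        funext j l
        rcases Nat.lt_or_ge l (j+2) with hl | hl
        · rw [xvF, extF_lt _ hl]
          rfl
        · rw [xvF, extF_ge _ hl, H.limP_supp j l hl]
      have hcross : ∀ i, limP (bE c q) (xvF (gmapF A P w)) i = zwF P w i := by
        rw [hx]
        exact limP_cross hcsB H.hxt H.hxs (fun j l hl => H.limP_supp j l hl)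
          (fun j => H.limP_close j)
      funext i l
      show limP (bE c q) (xvF (gmapF A P w)) i ↑l / P i = w i l
      rw [congrFun (hcross i) ↑l]
      rw [show zwF P w i ↑l = (P i : ℝ) * w i l from by
        rw [zwF, extF_apply_fin]]
      have hPne : (P i : ℝ) ≠ 0 := by exact_mod_cast (hP0 i).ne'
      rw [mul_comm, mul_div_assoc, div_self hPne, mul_one]
    -- package into the statement
    refine ⟨⟨⟨fun v => ⟨fmapF c q P ↑v, fun i => fmem1 ↑v v.2.1 v.2.2 i,
        fun i => funext fun l => (fmem2 ↑v v.2.1 v.2.2 i l).trans (hmulVec _ i l).symm⟩,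
      fun ww => ⟨gmapF A P ↑ww, fun n => gmem1 ↑ww ww.2.1
        (fun i l => (congrFun (ww.2.2 i) l).trans (hmulVec _ i l)) n,
        fun n => gthread ↑ww ww.2.1
        (fun i l => (congrFun (ww.2.2 i) l).trans (hmulVec _ i l)) n⟩,
      fun v => Subtype.ext (hgf ↑v v.2.1 v.2.2),
      fun ww => Subtype.ext (hfg ↑ww ww.2.1
        (fun i l => (congrFun (ww.2.2 i) l).trans (hmulVec _ i l)))⟩, ?_, ?_⟩, ?_⟩
    · -- continuity of the forward map
      refine Continuous.subtype_mk ?_ _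
      refine continuous_pi fun i => continuous_pi fun l => ?_
      show Continuous fun v : {v : ∀ n : ℕ, Fin (n+1) → ℝ //
        (∀ n, v n ∈ simplexSet (n + 1) 1) ∧ ∀ n, v n = A n (v (n + 1))} =>
        limP (bE c q) (xvF ↑v) i ↑l / P i
      refine Continuous.div_const ?_ _
      refine limP_param_continuous (g := aE A)
        (fun v : {v : ∀ n : ℕ, Fin (n+1) → ℝ //
          (∀ n, v n ∈ simplexSet (n + 1) 1) ∧ ∀ n, v n = A n (v (n + 1))} =>
          Hv ↑v v.2.1 v.2.2) (fun j l' => ?_) i ↑l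
      exact (extF_continuous l').comp ((continuous_apply (j+1)).comp continuous_subtype_val)
    · -- continuity of the inverse map
      refine Continuous.subtype_mk ?_ _
      refine continuous_pi fun n => ?_
      have hzc : ∀ j l', Continuous fun ww : {w : ∀ i : ℕ, Fin (i+2) → ℝ //
          (∀ i, w i ∈ simplexSet (i+2) (P i)) ∧
          ∀ i, w i = ((Matrix.of (fun l j => ((c i j l : ℕ) : ℤ))).map
            (Int.cast : ℤ → ℝ)).mulVec (w (i+1))} => zwF P (↑ww) j l' := by
        intro j l'
        refine continuous_const.mul ?_
        exact (extF_continuous l').comp ((continuous_apply j).comp continuous_subtype_val)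
      have hlimc : ∀ m (l : ℕ), Continuous fun ww : {w : ∀ i : ℕ, Fin (i+2) → ℝ //
          (∀ i, w i ∈ simplexSet (i+2) (P i)) ∧
          ∀ i, w i = ((Matrix.of (fun l j => ((c i j l : ℕ) : ℤ))).map
            (Int.cast : ℤ → ℝ)).mulVec (w (i+1))} => limP (aE A) (zwF P ↑ww) m l := by
        intro m l
        refine limP_param_continuous (g := bE c q)
          (fun ww : {w : ∀ i : ℕ, Fin (i+2) → ℝ //
              (∀ i, w i ∈ simplexSet (i+2) (P i)) ∧
              ∀ i, w i = ((Matrix.of (fun l j => ((c i j l : ℕ) : ℤ))).map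
                (Int.cast : ℤ → ℝ)).mulVec (w (i+1))} => Hw ↑ww ww.2.1
            (fun i l => (congrFun (ww.2.2 i) l).trans (hmulVec _ i l))) hzc m l
      cases n with
      | zero =>
          refine continuous_pi fun l => ?_
          have hsumc : Continuous (fun ww : {w : ∀ i : ℕ, Fin (i+2) → ℝ //
              (∀ i, w i ∈ simplexSet (i+2) (P i)) ∧
              ∀ i, w i = ((Matrix.of (fun l j => ((c i j l : ℕ) : ℤ))).map
                (Int.cast : ℤ → ℝ)).mulVec (w (i+1))} =>
              ∑ j : Fin 2, A 0 (Pi.single j 1) l * limP (aE A) (zwF P ↑ww) 0 ↑j) :=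
            continuous_finset_sum _ fun j _ => continuous_const.mul (hlimc 0 ↑j)
          exact hsumc.congr fun ww => (lin_apply (A 0) _ l).symm
      | succ m =>
          exact continuous_pi fun l => hlimc m ↑l
    · -- affinity
      intro x y z t ht0 ht1 hconv
      have hcomb : ∀ j l', xvF (↑z) j l' = t * xvF (↑x) j l' + (1-t) * xvF (↑y) j l' := by
        intro j l'
        rcases Nat.lt_or_ge l' (j+2) with hl | hl
        · rw [xvF, xvF, xvF, extF_lt _ hl, extF_lt _ hl, extF_lt _ hl]
          have := congrFun (congrFun hconv (j+1)) ⟨l', hl⟩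
          simpa using this
        · rw [xvF, xvF, xvF, extF_ge _ hl, extF_ge _ hl, extF_ge _ hl]
          ring
      have key : ∀ i (l : Fin (i+2)), fmapF c q P (↑z) i l
          = t * fmapF c q P (↑x) i l + (1-t) * fmapF c q P (↑y) i l := by
        intro i l
        show limP (bE c q) (xvF ↑z) i ↑l / P i = _
        rw [limP_comb (Hv ↑x x.2.1 x.2.2) (Hv ↑y y.2.1 y.2.2) t (1-t) hcomb i ↑l]
        show (t * limP (bE c q) (xvF ↑x) i ↑l + (1-t) * limP (bE c q) (xvF ↑y) i ↑l) / P i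
            = t * (limP (bE c q) (xvF ↑x) i ↑l / P i) + (1-t) * (limP (bE c q) (xvF ↑y) i ↑l / P i)
        ring
      funext i
      funext l
      have := key i l
      simpa using this
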